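/- Let n_1, ..., n_k and m_1, ..., m_k be nonnegative integers with 0 ≤ m_i ≤ n_i for all i, N = sum n_i ≥ 1, N' = sum m_i ≥ 1. Then N - (sum_i n_i^2)/N ≥ N' - (sum_i m_i^2)/N'. Equivalently, with p_i = n_i/N and q_i = m_i/N', we have N·sum_i p_i(1-p_i) ≥ N'·sum_i q_i(1-q_i). -/
import Mathlib

/-- Real-arithmetic step: adding one unit to a coordinate of value `a`. -/
lemma stmt7_real_step (N S a : ℝ) (hN : 1 ≤ N) (ha : a ≤ N) (ha2 : a ^ 2 ≤ S) :
    N - S / N ≤ (N + 1) - (S + 2 * a + 1) / (N + 1) := by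
  have hN0 : (0:ℝ) < N := by linarith
  have hN1 : (0:ℝ) < N + 1 := by linarith
  have hS : S / N * N = S := div_mul_cancel₀ _ (ne_of_gt hN0)
  have key : (S + 2 * a + 1) / (N + 1) ≤ S / N + 1 := by
    rw [div_le_iff₀ hN1]
    nlinarith [sq_nonneg (a - N), hS]
  linarith

lemma stmt7_sum_update (k : ℕ) (m : Fin k → ℕ) (j : Fin k) (g : ℕ → ℝ) :
    (∑ i, g ((Function.update m j (m j + 1)) i))
      = g (m j + 1) - g (m j) + ∑ i, g (m i) := by
  rw [← Finset.add_sum_erase _ (fun i => g ((Function.update m j (m j + 1)) i))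
      (Finset.mem_univ j),
    ← Finset.add_sum_erase _ (fun i => g (m i)) (Finset.mem_univ j),
    Function.update_self]
  have : ∑ i ∈ Finset.univ.erase j, g ((Function.update m j (m j + 1)) i)
      = ∑ i ∈ Finset.univ.erase j, g (m i) := by
    refine Finset.sum_congr rfl fun i hi => ?_
    rw [Function.update_of_ne (Finset.ne_of_mem_erase hi)]
  rw [this]; ring

/-- Step lemma: bumping one coordinate by 1 increases `N - S/N`. -/
lemma stmt7_step (k : ℕ) (m : Fin k → ℕ) (hN : 1 ≤ ∑ i, m i) (j : Fin k) :
    (∑ i, (m i : ℝ)) - (∑ i, (m i : ℝ) ^ 2) / (∑ i, (m i : ℝ))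
      ≤ (∑ i, ((Function.update m j (m j + 1)) i : ℝ))
        - (∑ i, ((Function.update m j (m j + 1)) i : ℝ) ^ 2)
          / (∑ i, ((Function.update m j (m j + 1)) i : ℝ)) := by
  have h1 : (∑ i, ((Function.update m j (m j + 1)) i : ℝ))
      = (∑ i, (m i : ℝ)) + 1 := by
    rw [stmt7_sum_update k m j (fun x => (x : ℝ))]; push_cast; ring
  have h2 : (∑ i, ((Function.update m j (m j + 1)) i : ℝ) ^ 2)
      = (∑ i, (m i : ℝ) ^ 2) + 2 * (m j : ℝ) + 1 := by
    rw [stmt7_sum_update k m j (fun x => (x : ℝ) ^ 2)]; push_cast; ring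
  rw [h1, h2]
  have hNr : (1:ℝ) ≤ ∑ i, (m i : ℝ) := by
    have : ((1:ℕ) : ℝ) ≤ ((∑ i, m i : ℕ) : ℝ) := Nat.cast_le.mpr hN
    simpa using this
  have ha : (m j : ℝ) ≤ ∑ i, (m i : ℝ) :=
    Finset.single_le_sum (f := fun i => (m i : ℝ)) (fun i _ => by positivity)
      (Finset.mem_univ j)
  have ha2 : (m j : ℝ) ^ 2 ≤ ∑ i, (m i : ℝ) ^ 2 :=
    Finset.single_le_sum (f := fun i => (m i : ℝ) ^ 2) (fun i _ => by positivity)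
      (Finset.mem_univ j)
  exact stmt7_real_step _ _ _ hNr ha ha2

lemma stmt7_aux (k : ℕ) (n : Fin k → ℕ) :
    ∀ d (m : Fin k → ℕ), (∀ i, m i ≤ n i) → 1 ≤ ∑ i, m i →
      (∑ i, (n i - m i)) = d →
    (∑ i, (m i : ℝ)) - (∑ i, (m i : ℝ) ^ 2) / (∑ i, (m i : ℝ))
      ≤ (∑ i, (n i : ℝ)) - (∑ i, (n i : ℝ) ^ 2) / (∑ i, (n i : ℝ)) := by
  intro d
  induction d with
  | zero =>
    intro m hle hN' hd
    have : m = n := by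
      funext i
      have hi : n i - m i = 0 :=
        Nat.eq_zero_of_le_zero (le_trans
          (Finset.single_le_sum (f := fun i => n i - m i) (fun i _ => Nat.zero_le _)
            (Finset.mem_univ i)) (le_of_eq hd))
      have := hle i
      omega
    rw [this]
  | succ d ih =>
    intro m hle hN' hd
    have hex : ∃ j, m j < n j := by
      by_contra h
      push_neg at h
      have : (∑ i, (n i - m i)) = 0 := by
        refine Finset.sum_eq_zero fun i _ => ?_
        have := h i; have := hle i; omega
      omega
    obtain ⟨j, hj⟩ := hex
    set m' := Function.update m j (m j + 1) with hm'
    have hle' : ∀ i, m' i ≤ n i := by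
      intro i
      rcases eq_or_ne i j with rfl | hne
      · rw [hm', Function.update_self]; omega
      · rw [hm', Function.update_of_ne hne]; exact hle i
    have hsum' : (∑ i, m' i) = (∑ i, m i) + 1 := by
      rw [hm', ← Finset.add_sum_erase _ (Function.update m j (m j + 1)) (Finset.mem_univ j),
        ← Finset.add_sum_erase _ m (Finset.mem_univ j), Function.update_self]
      have : ∑ i ∈ Finset.univ.erase j, Function.update m j (m j + 1) i
          = ∑ i ∈ Finset.univ.erase j, m i :=
        Finset.sum_congr rfl fun i hi =>
          Function.update_of_ne (Finset.ne_of_mem_erase hi) _ _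
      rw [this]; ring
    have hd' : (∑ i, (n i - m' i)) = d := by
      have e1 : (∑ i, (n i - m i))
          = (n j - m j) + ∑ i ∈ Finset.univ.erase j, (n i - m i) :=
        (Finset.add_sum_erase _ (fun i => n i - m i) (Finset.mem_univ j)).symm
      have e2 : (∑ i, (n i - m' i))
          = (n j - m' j) + ∑ i ∈ Finset.univ.erase j, (n i - m' i) :=
        (Finset.add_sum_erase _ (fun i => n i - m' i) (Finset.mem_univ j)).symm
      have e3 : ∑ i ∈ Finset.univ.erase j, (n i - m' i)
          = ∑ i ∈ Finset.univ.erase j, (n i - m i) := by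
        refine Finset.sum_congr rfl fun i hi => ?_
        rw [hm', Function.update_of_ne (Finset.ne_of_mem_erase hi)]
      have e4 : m' j = m j + 1 := by rw [hm', Function.update_self]
      omega
    have step := stmt7_step k m hN' j
    have tail := ih m' hle' (by omega) hd'
    exact le_trans step tail

theorem stmt7 (k : ℕ) (n m : Fin k → ℕ) (hle : ∀ i, m i ≤ n i)
    (hN : 1 ≤ ∑ i, n i) (hN' : 1 ≤ ∑ i, m i) :
    (∑ i, (m i : ℝ)) - (∑ i, (m i : ℝ) ^ 2) / (∑ i, (m i : ℝ))
      ≤ (∑ i, (n i : ℝ)) - (∑ i, (n i : ℝ) ^ 2) / (∑ i, (n i : ℝ)) := by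
  exact stmt7_aux k n _ m hle hN' rfl
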